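/- For graphs (r = 2) and k ≥ 2, the Ramsey number R(K_k, T) equals (k-1)t + 1 for every tree T with t edges; that is, every red-blue edge-coloring of K_{(k-1)t+1} contains a red K_k or a blue copy of T, and there is a coloring of K_{(k-1)t} with neither. -/

import Mathlib

open Finset

structure FinHypergraph (V : Type*) where
  edges : Finset (Finset V)

namespace FinHypergraph

variable {V : Type*} [DecidableEq V]

/-- `H` is `r`-uniform: every edge has exactly `r` vertices. -/
def Uniform (H : FinHypergraph V) (r : ℕ) : Prop := ∀ e ∈ H.edges, e.card = r

/-- Two vertices are adjacent if some edge contains both. -/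
def adj (H : FinHypergraph V) (u w : V) : Prop := ∃ e ∈ H.edges, u ∈ e ∧ w ∈ e

/-- `H` is connected: any two vertices are joined by a walk. -/
def Connected (H : FinHypergraph V) : Prop := ∀ u w : V, Relation.ReflTransGen H.adj u w

/-- No two distinct edges intersect in more than one vertex. -/
def Linear (H : FinHypergraph V) : Prop :=
  ∀ e ∈ H.edges, ∀ f ∈ H.edges, e ≠ f → (e ∩ f).card ≤ 1

/-- A Berge cycle: distinct vertices `v 0, …, v (k-1)` and distinct edges
`e 0, …, e (k-1)`, `k ≥ 2`, with `{v i, v (i+1)} ⊆ e i` cyclically. -/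
def HasBergeCycle (H : FinHypergraph V) : Prop :=
  ∃ k : ℕ, ∃ _ : 2 ≤ k, ∃ (v : Fin k → V) (e : Fin k → Finset V),
    Function.Injective v ∧ Function.Injective e ∧
    (∀ i, e i ∈ H.edges) ∧
    (∀ i : Fin k, v i ∈ e i ∧ v ⟨(i.val + 1) % k, Nat.mod_lt _ (by omega)⟩ ∈ e i)

/-- A hypertree: connected, linear, with no Berge cycle. -/
def IsHypertree (H : FinHypergraph V) : Prop :=
  H.Connected ∧ H.Linear ∧ ¬ H.HasBergeCycle

/-- A proper coloring: no edge is monochromatic. -/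
def Proper (H : FinHypergraph V) {k : ℕ} (c : V → Fin k) : Prop :=
  ∀ e ∈ H.edges, ¬ ∀ u ∈ e, ∀ w ∈ e, c u = c w

/-- The chromatic number: least number of colors in a proper coloring. -/
noncomputable def chromaticNumber (H : FinHypergraph V) : ℕ :=
  sInf {k | ∃ c : V → Fin k, H.Proper c}

/-- `H` contains a copy of `T`: an injective vertex map sending edges to edges. -/
def ContainsCopy {W : Type*} [DecidableEq W] (H : FinHypergraph V) (T : FinHypergraph W) : Prop :=
  ∃ φ : W → V, Function.Injective φ ∧ ∀ e ∈ T.edges, e.image φ ∈ H.edges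

end FinHypergraph

/-- The complete `r`-uniform hypergraph on `Fin n`. -/
def completeHypergraph (n r : ℕ) : FinHypergraph (Fin n) :=
  ⟨Finset.univ.powersetCard r⟩

section ChvatalProof

open SimpleGraph

universe u v



private lemma walk_avoid {W : Type u} (T : SimpleGraph W) (x y : W)
    (hy : ∀ z, T.Adj x z → z = y) :
    ∀ (n : ℕ) {u w : W} (p : T.Walk u w), p.length ≤ n → ∀ (hu : u ≠ x) (hw : w ≠ x),
      Relation.ReflTransGen (fun a b : {z : W // z ≠ x} => T.Adj a b) ⟨u, hu⟩ ⟨w, hw⟩ := by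
  intro n
  induction n with
  | zero =>
    intro u w p hl hu hw
    cases p with
    | nil => exact Relation.ReflTransGen.refl
    | cons h q => simp [SimpleGraph.Walk.length_cons] at hl
  | succ m IH =>
    intro u w p hl hu hw
    cases p with
    | nil => exact Relation.ReflTransGen.refl
    | @cons _ a _ h q =>
      by_cases ha : a = x
      · subst ha
        cases q with
        | nil => exact absurd rfl hw
        | @cons _ b _ h2 q2 =>
          have hb : b = y := hy _ h2
          have hu' : u = y := hy _ h.symm
          have hlen : (q2.copy (hb.trans hu'.symm) rfl).length ≤ m := by
            rw [SimpleGraph.Walk.length_copy]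
            simp only [SimpleGraph.Walk.length_cons] at hl
            omega
          exact IH _ hlen hu hw
      · refine Relation.ReflTransGen.head (show T.Adj u a from h) (IH q ?_ ha hw)
        simp only [SimpleGraph.Walk.length_cons] at hl
        omega

private lemma degree_pos_of_connected {W : Type u} [Fintype W] (T : SimpleGraph W)
    [DecidableRel T.Adj] (hconn : T.Connected) (h2 : 2 ≤ Fintype.card W) (v : W) :
    1 ≤ T.degree v := by
  have : Nontrivial W := Fintype.one_lt_card_iff_nontrivial.mp (by omega)
  obtain ⟨w, hw⟩ := exists_ne v
  rw [Nat.one_le_iff_ne_zero]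
  intro h0
  have h0' : ¬ ∃ z, T.Adj v z := by
    rw [← T.degree_pos_iff_exists_adj, h0]; omega
  obtain ⟨p⟩ := hconn.preconnected v w
  cases p with
  | nil => exact hw rfl
  | cons h q => exact h0' ⟨_, h⟩

private lemma exists_leaf {W : Type u} [Fintype W] (T : SimpleGraph W) [DecidableRel T.Adj]
    (hconn : T.Connected) (hacyc : T.IsAcyclic) (h2 : 2 ≤ Fintype.card W) :
    ∃ x, T.degree x = 1 := by
  by_contra hno
  push_neg at hno
  have h1 : ∀ v, 2 ≤ T.degree v := fun v => by
    have ha := degree_pos_of_connected T hconn h2 v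
    have hb := hno v; omega
  have hsum : ∑ v, T.degree v = 2 * T.edgeFinset.card := T.sum_degrees_eq_twice_card_edges
  have hedge : T.edgeFinset.card + 1 = Fintype.card W := (IsTree.mk hconn hacyc).card_edgeFinset
  have hge : 2 * Fintype.card W ≤ ∑ v, T.degree v := by
    calc 2 * Fintype.card W = ∑ _v : W, 2 := by
          rw [Finset.sum_const, Finset.card_univ, smul_eq_mul, mul_comm]
      _ ≤ ∑ v, T.degree v := Finset.sum_le_sum fun v _ => h1 v
  omega

private lemma treeEmbed : ∀ (n : ℕ) {W : Type u} [Fintype W] (T : SimpleGraph W),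
    Fintype.card W = n → T.Connected → T.IsAcyclic →
    ∀ {V : Type v} [Fintype V] (G : SimpleGraph V) [DecidableRel G.Adj], Nonempty V →
    (∀ u : V, n ≤ G.degree u + 1) → ∃ f : T →g G, Function.Injective f := by
  intro n
  induction n with
  | zero =>
    intro W _ T hcard hconn _ V _ G _ _ _
    have := hconn.nonempty
    rw [← Fintype.card_pos_iff, hcard] at this
    omega
  | succ m IH =>
    intro W _W T hcard hconn hacyc V _V G _G hV hdeg
    classical
    rcases Nat.eq_zero_or_pos m with hm | hm
    · subst hm
      have hsub : Subsingleton W := by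
        rw [← Fintype.card_le_one_iff_subsingleton, hcard]
      obtain ⟨v0⟩ := hV
      refine ⟨⟨fun _ => v0, ?_⟩, fun a b _ => Subsingleton.elim a b⟩
      intro a b hab
      cases Subsingleton.elim a b
      exact absurd hab (T.irrefl)
    · -- m ≥ 1, card W = m + 1 ≥ 2
      obtain ⟨x, hx⟩ := exists_leaf T hconn hacyc (by omega)
      obtain ⟨y, hyN⟩ : ∃ y, T.neighborFinset x = {y} := Finset.card_eq_one.mp hx
      have hy : ∀ z, T.Adj x z → z = y := fun z hz => by
        have hz' := (T.mem_neighborFinset x z).2 hz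
        rw [hyN, Finset.mem_singleton] at hz'
        exact hz'
      have hyadj : T.Adj x y := by
        have : y ∈ T.neighborFinset x := by rw [hyN]; exact Finset.mem_singleton_self y
        exact (T.mem_neighborFinset x y).1 this
      have hyx : y ≠ x := fun h => T.irrefl (h ▸ hyadj)
      set s : Set W := {z | z ≠ x} with hs
      have hscard : Fintype.card s = m := by
        have h1 : Fintype.card s = Fintype.card {z : W // ¬ z = x} :=
          Fintype.card_congr (Equiv.subtypeEquivRight fun z => Iff.rfl)
        rw [h1, Fintype.card_subtype_compl, Fintype.card_subtype_eq, hcard]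
        omega
      have hconn' : (T.induce s).Connected := by
        rw [SimpleGraph.connected_iff]
        refine ⟨?_, ⟨⟨y, hyx⟩⟩⟩
        rintro ⟨u, hu⟩ ⟨w, hw⟩
        obtain ⟨p⟩ := hconn.preconnected u w
        rw [SimpleGraph.reachable_iff_reflTransGen]
        exact walk_avoid T x y hy p.length p le_rfl hu hw
      have hacyc' : (T.induce s).IsAcyclic := by
        intro c p hp
        exact hacyc (p.map (SimpleGraph.Embedding.induce s).toHom)
          (hp.map Subtype.val_injective)
      obtain ⟨f', hf'⟩ := IH (T.induce s) hscard hconn' hacyc' G hV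
        (fun u => by have := hdeg u; omega)
      set y' : s := ⟨y, hyx⟩ with hy'
      set img : Finset V := Finset.univ.image f' with himgdef
      have himg : img.card = m := by
        rw [himgdef, Finset.card_image_of_injective _ hf', Finset.card_univ, hscard]
      have hz : ∃ z, z ∈ G.neighborFinset (f' y') ∧ z ∉ img := by
        by_contra hcon
        push_neg at hcon
        have hsub : G.neighborFinset (f' y') ⊆ img.erase (f' y') := by
          intro z hzmem
          refine Finset.mem_erase.2 ⟨?_, hcon z hzmem⟩
          intro hzz
          rw [hzz] at hzmem
          exact G.irrefl ((G.mem_neighborFinset _ _).1 hzmem)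
        have hle := Finset.card_le_card hsub
        rw [G.card_neighborFinset_eq_degree] at hle
        have h1 := hdeg (f' y')
        have hmem : f' y' ∈ img := by
          rw [himgdef]; exact Finset.mem_image_of_mem f' (Finset.mem_univ y')
        have h2 : (img.erase (f' y')).card = m - 1 := by
          rw [Finset.card_erase_of_mem hmem, himg]
        omega
      obtain ⟨z, hzadj, hzimg⟩ := hz
      have hzadj' : G.Adj (f' y') z := (G.mem_neighborFinset _ _).1 hzadj
      let f : W → V := fun w => if h : w = x then z else f' ⟨w, h⟩
      have hfne : ∀ (w : W) (h : w ≠ x), f w = f' ⟨w, h⟩ := fun w h => dif_neg h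
      have hfx : f x = z := dif_pos rfl
      have hmap : ∀ {a b : W}, T.Adj a b → G.Adj (f a) (f b) := by
        intro a b hab
        by_cases ha : a = x
        · have hb : b = y := hy b (by rwa [ha] at hab)
          have hbx : b ≠ x := by rw [hb]; exact hyx
          rw [ha, hfx, hfne b hbx]
          have hbb : (⟨b, hbx⟩ : s) = y' := Subtype.ext hb
          rw [hbb]
          exact hzadj'.symm
        · by_cases hbx : b = x
          · have ha' : a = y := hy a (by rw [hbx] at hab; exact hab.symm)
            rw [hbx, hfx, hfne a ha]
            have haa : (⟨a, ha⟩ : s) = y' := Subtype.ext ha'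
            rw [haa]
            exact hzadj'
          · rw [hfne a ha, hfne b hbx]
            exact f'.map_adj (show (T.induce s).Adj ⟨a, ha⟩ ⟨b, hbx⟩ from hab)
      have hinj : Function.Injective f := by
        intro a b hab
        by_cases ha : a = x <;> by_cases hb : b = x
        · rw [ha, hb]
        · rw [ha, hfx, hfne b hb] at hab
          refine absurd ?_ hzimg
          rw [hab, himgdef]
          exact Finset.mem_image_of_mem f' (Finset.mem_univ _)
        · rw [hb, hfx, hfne a ha] at hab
          refine absurd ?_ hzimg
          rw [← hab, himgdef]
          exact Finset.mem_image_of_mem f' (Finset.mem_univ _)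
        · rw [hfne a ha, hfne b hb] at hab
          exact congrArg Subtype.val (hf' hab)
      exact ⟨⟨f, hmap⟩, hinj⟩

private lemma ramseyStep (t : ℕ) (ht : 1 ≤ t) {W : Type u} [Fintype W] (T : SimpleGraph W)
    (hconn : T.Connected) (hacyc : T.IsAcyclic) (hcard : Fintype.card W = t + 1) :
    ∀ (j : ℕ) (V : Type v) [Fintype V] (R : SimpleGraph V), j * t + 1 ≤ Fintype.card V →
      (∃ S : Finset V, R.IsNClique (j + 1) S) ∨ (∃ f : T →g Rᶜ, Function.Injective f) := by
  intro j
  induction j with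
  | zero =>
    intro V _ R hV
    have hpos : 0 < Fintype.card V := by omega
    obtain ⟨v⟩ := Fintype.card_pos_iff.mp hpos
    refine Or.inl ⟨{v}, ?_⟩
    constructor
    · rw [Finset.coe_singleton]
      exact Set.pairwise_singleton v R.Adj
    · simp
  | succ j IH =>
    intro V _ R hV
    classical
    have hmul : (j + 1) * t = j * t + t := by ring
    by_cases hmin : ∀ u : V, t ≤ Rᶜ.degree u
    · right
      have hpos : Nonempty V := Fintype.card_pos_iff.mp (by omega)
      exact treeEmbed (t + 1) T hcard hconn hacyc Rᶜ hpos (fun u => by have := hmin u; omega)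
    · push_neg at hmin
      obtain ⟨v, hv⟩ := hmin
      have hcompl : Rᶜ.degree v = Fintype.card V - 1 - R.degree v := R.degree_compl v
      have hlt : R.degree v < Fintype.card V := R.degree_lt_card_verts v
      have hdegge : j * t + 1 ≤ R.degree v := by
        rw [hmul] at hV; omega
      have hscard : j * t + 1 ≤ Fintype.card ↥(R.neighborSet v) := by
        rw [R.card_neighborSet_eq_degree]; exact hdegge
      rcases IH ↥(R.neighborSet v) (R.induce (R.neighborSet v)) hscard with ⟨S', hS'⟩ | ⟨f', hf'⟩
      · left
        refine ⟨insert v (S'.image Subtype.val), ?_, ?_⟩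
        · rintro a ha b hb hab
          simp only [Finset.coe_insert, Set.mem_insert_iff, Finset.coe_image,
            Set.mem_image, Finset.mem_coe] at ha hb
          rcases ha with rfl | ⟨a', ha', rfl⟩
          · rcases hb with rfl | ⟨b', hb', rfl⟩
            · exact absurd rfl hab
            · exact b'.2
          · rcases hb with rfl | ⟨b', hb', rfl⟩
            · exact a'.2.symm
            · have hne : a' ≠ b' := fun h => hab (congrArg Subtype.val h)
              exact hS'.1 ha' hb' hne
        · have hvnot : v ∉ S'.image Subtype.val := by
            intro hmem
            obtain ⟨a', _, ha'⟩ := Finset.mem_image.mp hmem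
            have h3 : R.Adj v ↑a' := a'.2
            rw [ha'] at h3
            exact R.irrefl h3
          rw [Finset.card_insert_of_notMem hvnot,
            Finset.card_image_of_injective _ Subtype.val_injective, hS'.2]
      · right
        refine ⟨⟨fun w => (f' w).1, ?_⟩, fun a b h => hf' (Subtype.ext h)⟩
        intro a b hab
        have h2 := f'.map_adj hab
        rw [SimpleGraph.compl_adj] at h2 ⊢
        refine ⟨fun h => h2.1 (Subtype.ext h), fun h => h2.2 h⟩

end ChvatalProof

/-- Chvátal's theorem: `R(K_k, T) = (k-1)t + 1` for every tree `T` with `t` edges.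
A red-blue coloring of `K_n` is encoded by a graph `R` (red edges) and its
complement `Rᶜ` (blue edges). -/
theorem stmt15 (k t : ℕ) (hk : 2 ≤ k) (ht : 1 ≤ t)
    {W : Type*} [Fintype W] (T : SimpleGraph W)
    (hconn : T.Connected) (hacyc : T.IsAcyclic) (hcard : Fintype.card W = t + 1) :
    (∀ R : SimpleGraph (Fin ((k - 1) * t + 1)),
      (∃ S : Finset (Fin ((k - 1) * t + 1)), R.IsNClique k S) ∨
      (∃ f : T →g Rᶜ, Function.Injective f)) ∧
    (∃ R : SimpleGraph (Fin ((k - 1) * t)),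
      (¬ ∃ S : Finset (Fin ((k - 1) * t)), R.IsNClique k S) ∧
      ¬ ∃ f : T →g Rᶜ, Function.Injective f) := by
  constructor
  · intro R
    have h := ramseyStep t ht T hconn hacyc hcard (k - 1) (Fin ((k - 1) * t + 1)) R
      (by rw [Fintype.card_fin])
    have hk1 : k - 1 + 1 = k := by omega
    rwa [hk1] at h
  · refine ⟨⟨fun u w => (u : ℕ) / t ≠ (w : ℕ) / t, ⟨fun u w h => h.symm⟩, ⟨fun u h => h rfl⟩⟩,
      ?_, ?_⟩
    · rintro ⟨S, hS⟩
      have hlt : ∀ u : Fin ((k - 1) * t), (u : ℕ) / t < k - 1 := fun u =>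
        (Nat.div_lt_iff_lt_mul (by omega)).mpr u.2
      have hinj : Set.InjOn (fun u : Fin ((k - 1) * t) => (u : ℕ) / t) ↑S := by
        intro a ha b hb hab
        by_contra hne
        exact (hS.1 ha hb hne) hab
      have hcardle := Finset.card_le_card_of_injOn (fun u : Fin ((k - 1) * t) => (u : ℕ) / t)
        (fun a _ => Finset.mem_range.mpr (hlt a)) hinj
      rw [hS.2, Finset.card_range] at hcardle
      omega
    · rintro ⟨f, hfinj⟩
      have hadj : ∀ a b : W, T.Adj a b → ((f a : ℕ) / t = (f b : ℕ) / t) := by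
        intro a b hab
        have h2 := f.map_adj hab
        rw [SimpleGraph.compl_adj] at h2
        exact not_ne_iff.mp h2.2
      have hreach : ∀ a b : W, T.Reachable a b → ((f a : ℕ) / t = (f b : ℕ) / t) := by
        intro a b hr
        obtain ⟨p⟩ := hr
        induction p with
        | nil => rfl
        | cons he q ih => rw [hadj _ _ he]; exact ih
      obtain ⟨w0⟩ := hconn.nonempty
      have hall : ∀ w : W, (f w : ℕ) / t = (f w0 : ℕ) / t := fun w =>
        hreach w w0 (hconn.preconnected w w0)
      have h1 : Fintype.card W ≤ t := by
        have hinj2 : Set.InjOn (fun w : W => (f w : ℕ) % t) ↑(Finset.univ : Finset W) := by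
          intro a _ b _ hab
          have hab' : (f a : ℕ) % t = (f b : ℕ) % t := hab
          apply hfinj
          apply Fin.ext
          have e1 : t * ((f a : ℕ) / t) + (f a : ℕ) % t = (f a : ℕ) := Nat.div_add_mod _ t
          have e2 : t * ((f b : ℕ) / t) + (f b : ℕ) % t = (f b : ℕ) := Nat.div_add_mod _ t
          rw [hall a] at e1
          rw [hall b] at e2
          omega
        have hle := Finset.card_le_card_of_injOn (fun w : W => (f w : ℕ) % t)
          (fun w _ => Finset.mem_range.mpr (Nat.mod_lt _ (by omega))) hinj2
        rwa [Finset.card_univ, Finset.card_range] at hle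
      omega
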